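/- For n ≥ 4 and 3 ≤ m ≤ n−1, the number of α ∈ RD*_n with order-reversing degree exactly m equals C(n, m−1) − m − (m−1)(n−m). -/

import Mathlib

open Finset

namespace ORDPaper

/-- `f` is a full transformation of the chain `{1,…,n}`, acting as the identity outside. -/
def IsTrans (n : ℕ) (f : ℕ → ℕ) : Prop :=
  (∀ x, 1 ≤ x → x ≤ n → 1 ≤ f x ∧ f x ≤ n) ∧ ∀ x, ¬(1 ≤ x ∧ x ≤ n) → f x = x

/-- Composition of transformations, written left to right: `x(αβ) = (xα)β`. -/
def comp (f g : ℕ → ℕ) : ℕ → ℕ := fun x => g (f x)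

/-- The value of `f` at the cyclic successor of `i` (so `(n+1)α = 1α`). -/
def nxt (n : ℕ) (f : ℕ → ℕ) (i : ℕ) : ℕ := if i = n then f 1 else f (i + 1)

/-- `(1α,…,nα)` is cyclic: there is at most one descent (cyclically). -/
def Cyclic (n : ℕ) (f : ℕ → ℕ) : Prop :=
  ((Finset.Icc 1 n).filter (fun i => nxt n f i < f i)).card ≤ 1

/-- `(1α,…,nα)` is anti-cyclic: there is at most one ascent (cyclically). -/
def AntiCyclic (n : ℕ) (f : ℕ → ℕ) : Prop :=
  ((Finset.Icc 1 n).filter (fun i => f i < nxt n f i)).card ≤ 1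

/-- Order-decreasing on `{1,…,n}`. -/
def Decreasing (n : ℕ) (f : ℕ → ℕ) : Prop := ∀ x, 1 ≤ x → x ≤ n → f x ≤ x

/-- Image of `{1,…,n}` under `f`. -/
def im (n : ℕ) (f : ℕ → ℕ) : Finset ℕ := (Finset.Icc 1 n).image f

/-- Fixed points of `f` in `{1,…,n}`. -/
def fixSet (n : ℕ) (f : ℕ → ℕ) : Finset ℕ := (Finset.Icc 1 n).filter (fun x => f x = x)

/-- The semigroup `D_n` of order-decreasing full transformations. -/
def Dn (n : ℕ) : Set (ℕ → ℕ) := {f | IsTrans n f ∧ Decreasing n f}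

/-- Orientation-preserving order-decreasing transformations. -/
def OPD (n : ℕ) : Set (ℕ → ℕ) := {f | f ∈ Dn n ∧ Cyclic n f}

/-- Oriented order-decreasing transformations. -/
def ORDn (n : ℕ) : Set (ℕ → ℕ) := {f | f ∈ Dn n ∧ (Cyclic n f ∨ AntiCyclic n f)}

/-- `RD*_n`: orientation-reversing, order-decreasing, not orientation-preserving. -/
def RDstar (n : ℕ) : Set (ℕ → ℕ) := {f | f ∈ Dn n ∧ AntiCyclic n f ∧ ¬ Cyclic n f}

/-- `ORD(n,r)`. -/
def ORDr (n r : ℕ) : Set (ℕ → ℕ) := {f | f ∈ ORDn n ∧ (im n f).card ≤ r}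

/-- `OPD(n,r)`. -/
def OPDr (n r : ℕ) : Set (ℕ → ℕ) := {f | f ∈ OPD n ∧ (im n f).card ≤ r}

/-- The order-reversing degree: `min(X_n \ 1α⁻¹)`. -/
noncomputable def ordDeg (n : ℕ) (f : ℕ → ℕ) : ℕ := sInf {x | 1 ≤ x ∧ x ≤ n ∧ f x ≠ 1}

/-- Minimum of the preimage of `x` under `f` inside `{1,…,n}`. -/
noncomputable def preMin (n : ℕ) (f : ℕ → ℕ) (x : ℕ) : ℕ := sInf {y | 1 ≤ y ∧ y ≤ n ∧ f y = x}

/-- Membership in the subsemigroup generated by `A`. -/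
inductive gen (A : Set (ℕ → ℕ)) : (ℕ → ℕ) → Prop
  | base {f} : f ∈ A → gen A f
  | mul {f g} : gen A f → gen A g → gen A (comp f g)

/-- Rank of a transformation semigroup `S`. -/
noncomputable def rank (S : Set (ℕ → ℕ)) : ℕ :=
  sInf {k | ∃ A : Set (ℕ → ℕ), A ⊆ S ∧ A.Finite ∧ A.ncard = k ∧ {f | gen A f} = S}

/-- `r̂ = min{r, ⌈(n+1)/2⌉}`. -/
def rhat (n r : ℕ) : ℕ := min r ((n + 2) / 2)

/-- `ρ_m` fixes `1,…,m` and sends `m+1,…,n` to `1`. -/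
def rho (n m : ℕ) : ℕ → ℕ := fun x =>
  if ¬(1 ≤ x ∧ x ≤ n) then x else if x ≤ m then x else 1

/-- The order-preserving degree `opd(α) = max{m : α|_{X_m} is order-preserving}`. -/
noncomputable def opd (n : ℕ) (f : ℕ → ℕ) : ℕ :=
  sSup {m | m ≤ n ∧ ∀ x y, 1 ≤ x → x ≤ y → y ≤ m → f x ≤ f y}

/-- The set `C = (⋃_{m=r+1}^n B_m) ∪ {ρ_2,…,ρ_r}`. -/
def Cset (n r : ℕ) : Set (ℕ → ℕ) :=
  {f | (f ∈ OPD n ∧ comp f f = f ∧ (im n f).card = r ∧ r + 1 ≤ opd n f ∧ opd n f ≤ n)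
    ∨ (∃ m, 2 ≤ m ∧ m ≤ r ∧ f = rho n m)}

/-- The map `λ_{m,r}`: sends `[1,m-1]` to `1`, maps `x ∈ [m, min(2m-p-2,n)]` to `2m-x`
(where `p = max{0, m-r}` is `m - r` in truncated subtraction), and the rest of `[1,n]` to `1`. -/
def lam (n r m : ℕ) : ℕ → ℕ := fun x =>
  if ¬(1 ≤ x ∧ x ≤ n) then x
  else if x < m then 1
  else if x ≤ min (2 * m - (m - r) - 2) n then 2 * m - x
  else 1

/-- `G_{n,r} = {λ_{m,r} : 3 ≤ m ≤ n-1}`. -/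
def Gset (n r : ℕ) : Set (ℕ → ℕ) := {f | ∃ m, 3 ≤ m ∧ m ≤ n - 1 ∧ f = lam n r m}

/-- `L_{m,r}`. -/
def Lset (n r m : ℕ) : Set (ℕ → ℕ) :=
  {f | f ∈ ORDn n ∧ im n f = im n (lam n r m) ∧
    ∀ x ∈ im n (lam n r m), preMin n f x = preMin n (lam n r m) x}

/-- `α_{m,r}`: the idempotent fixing `{1} ∪ [m, 2m-p-2]` and sending the rest of `[1,n]` to `1`. -/
def alphaMap (n r m : ℕ) : ℕ → ℕ := fun x =>
  if ¬(1 ≤ x ∧ x ≤ n) then x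
  else if x < m then 1
  else if x ≤ 2 * m - (m - r) - 2 then x
  else 1

/-- `β_{m,r}`: sends `[1,m-1]` to `1`, maps `m,…,2m-p-3` order-reversingly to `m,…,p+3`,
and `[2m-p-2, n]` to `p+2`. -/
def betaMap (n r m : ℕ) : ℕ → ℕ := fun x =>
  if ¬(1 ≤ x ∧ x ≤ n) then x
  else if x < m then 1
  else if x ≤ 2 * m - (m - r) - 3 then 2 * m - x
  else (m - r) + 2

/-- `S` is a subsemigroup of `T`. -/
def IsSubsemigroupOf (S T : Set (ℕ → ℕ)) : Prop :=
  S ⊆ T ∧ ∀ f ∈ S, ∀ g ∈ S, comp f g ∈ S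

/-- `S` is a maximal subsemigroup of `T`. -/
def IsMaximalSubsemigroupOf (S T : Set (ℕ → ℕ)) : Prop :=
  IsSubsemigroupOf S T ∧ S ≠ T ∧ ∀ U, IsSubsemigroupOf U T → S ⊆ U → U = S ∨ U = T


/-- Structural predicate. -/
def Pfull (n m : ℕ) (f : ℕ → ℕ) : Prop :=
  (∀ x, ¬(1 ≤ x ∧ x ≤ n) → f x = x) ∧
  (∀ x, 1 ≤ x → x < m → f x = 1) ∧
  (∀ x y, m ≤ x → x ≤ y → y ≤ n → f y ≤ f x) ∧
  (∀ x, m ≤ x → x ≤ n → 1 ≤ f x ∧ f x ≤ m)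

lemma chain_desc (f : ℕ → ℕ) (a : ℕ) :
    ∀ d, (∀ i, a ≤ i → i < a + d → f (i + 1) ≤ f i) → f (a + d) ≤ f a := by
  intro d
  induction d with
  | zero => simp
  | succ d ih =>
    intro h
    have h1 : f (a + d + 1) ≤ f (a + d) := h (a + d) (by omega) (by omega)
    have h2 := ih (fun i hi hi2 => h i hi (by omega))
    have : a + (d + 1) = a + d + 1 := by omega
    rw [this]
    exact le_trans h1 h2

lemma chain_asc (f : ℕ → ℕ) (a : ℕ) :
    ∀ d, (∀ i, a ≤ i → i < a + d → f i ≤ f (i + 1)) → f a ≤ f (a + d) := by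
  intro d
  induction d with
  | zero => simp
  | succ d ih =>
    intro h
    have h1 : f (a + d) ≤ f (a + d + 1) := h (a + d) (by omega) (by omega)
    have h2 := ih (fun i hi hi2 => h i hi (by omega))
    have : a + (d + 1) = a + d + 1 := by omega
    rw [this]
    exact le_trans h2 h1

lemma exists_desc (f : ℕ → ℕ) (a b : ℕ) (hab : a ≤ b) (hfb : f b < f a) :
    ∃ i, a ≤ i ∧ i < b ∧ f (i + 1) < f i := by
  by_contra hc
  push_neg at hc
  obtain ⟨d, rfl⟩ := Nat.exists_eq_add_of_le hab
  have := chain_asc f a d (fun i hi hi2 => hc i hi (by omega))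
  omega

lemma mem_S_iff (n m : ℕ) (hn : 4 ≤ n) (hm3 : 3 ≤ m) (hm : m + 1 ≤ n) (f : ℕ → ℕ) :
    (f ∈ RDstar n ∧ ordDeg n f = m) ↔ (Pfull n m f ∧ 2 ≤ f m ∧ ¬ Cyclic n f) := by
  constructor
  · rintro ⟨⟨⟨⟨hbound, hout⟩, hdec⟩, hanti, hncyc⟩, hdeg⟩
    have hTne : {x | 1 ≤ x ∧ x ≤ n ∧ f x ≠ 1}.Nonempty := by
      by_contra h
      rw [Set.not_nonempty_iff_eq_empty] at h
      rw [ordDeg, h] at hdeg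
      simp [Nat.sInf_empty] at hdeg
      omega
    have hmT : m ∈ {x | 1 ≤ x ∧ x ≤ n ∧ f x ≠ 1} := hdeg ▸ Nat.sInf_mem hTne
    obtain ⟨hm1, hmn, hfm1⟩ := hmT
    have hpre : ∀ x, 1 ≤ x → x < m → f x = 1 := by
      intro x h1 hx
      by_contra hfx
      have hxT : x ∈ {x | 1 ≤ x ∧ x ≤ n ∧ f x ≠ 1} := ⟨h1, by omega, hfx⟩
      have := Nat.sInf_le hxT
      rw [ordDeg] at hdeg
      omega
    have hfm2 : 2 ≤ f m := by
      have := (hbound m (by omega) hmn).1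
      omega
    have hasc : ∀ i, m ≤ i → i < n → f (i + 1) ≤ f i := by
      intro i hi hi2
      by_contra hlt
      push_neg at hlt
      have himem : i ∈ (Finset.Icc 1 n).filter (fun i => f i < nxt n f i) := by
        rw [Finset.mem_filter, Finset.mem_Icc]
        refine ⟨⟨by omega, by omega⟩, ?_⟩
        rw [nxt, if_neg (by omega)]
        exact hlt
      have hm1mem : (m - 1) ∈ (Finset.Icc 1 n).filter (fun i => f i < nxt n f i) := by
        rw [Finset.mem_filter, Finset.mem_Icc]
        refine ⟨⟨by omega, by omega⟩, ?_⟩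
        rw [nxt, if_neg (by omega)]
        have h1 : f (m - 1) = 1 := hpre (m - 1) (by omega) (by omega)
        have h2 : m - 1 + 1 = m := by omega
        rw [h1, h2]
        omega
      have := Finset.card_le_one.mp hanti i himem (m - 1) hm1mem
      omega
    have hantitone : ∀ x y, m ≤ x → x ≤ y → y ≤ n → f y ≤ f x := by
      intro x y hx hxy hyn
      obtain ⟨d, rfl⟩ := Nat.exists_eq_add_of_le hxy
      exact chain_desc f x d (fun i hi hi2 => hasc i (by omega) (by omega))
    refine ⟨⟨hout, hpre, hantitone, ?_⟩, hfm2, hncyc⟩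
    intro x hxm hxn
    refine ⟨(hbound x (by omega) hxn).1, ?_⟩
    have h1 : f x ≤ f m := hantitone m x (le_refl m) hxm hxn
    have h2 : f m ≤ m := hdec m (by omega) hmn
    omega
  · rintro ⟨⟨hout, hpre, hantitone, hbnd⟩, hfm2, hncyc⟩
    have hfm' : 1 ≤ f m ∧ f m ≤ m := hbnd m (le_refl m) (by omega)
    have htrans : IsTrans n f := by
      refine ⟨?_, hout⟩
      intro x h1 hxn
      by_cases hx : x < m
      · rw [hpre x h1 hx]; omega
      · have := hbnd x (by omega) hxn; omega
    have hdec : Decreasing n f := by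
      intro x h1 hxn
      by_cases hx : x < m
      · rw [hpre x h1 hx]; omega
      · have := hbnd x (by omega) hxn; omega
    have hanti : AntiCyclic n f := by
      rw [AntiCyclic]
      have hsub : (Finset.Icc 1 n).filter (fun i => f i < nxt n f i) ⊆ {m - 1} := by
        intro i hi
        rw [Finset.mem_filter, Finset.mem_Icc] at hi
        obtain ⟨⟨h1, h2⟩, hasc⟩ := hi
        rw [Finset.mem_singleton]
        rw [nxt] at hasc
        by_cases hin : i = n
        · rw [if_pos hin] at hasc
          rw [hpre 1 (le_refl 1) (by omega)] at hasc
          have : 1 ≤ f i := by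
            rw [hin]
            exact (hbnd n (by omega) (le_refl n)).1
          omega
        · rw [if_neg hin] at hasc
          by_cases hi1 : i + 1 < m
          · rw [hpre (i + 1) (by omega) hi1] at hasc
            rw [hpre i (by omega) (by omega)] at hasc
            omega
          · by_cases hi2 : i + 1 = m
            · omega
            · have him : m ≤ i := by omega
              have := hantitone i (i + 1) him (by omega) (by omega)
              omega
      calc ((Finset.Icc 1 n).filter (fun i => f i < nxt n f i)).card
          ≤ ({m - 1} : Finset ℕ).card := Finset.card_le_card hsub
        _ = 1 := by simp
    have hdeg : ordDeg n f = m := by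
      rw [ordDeg]
      have hmT : m ∈ {x | 1 ≤ x ∧ x ≤ n ∧ f x ≠ 1} := ⟨by omega, by omega, by omega⟩
      have hmin : ∀ x ∈ {x | 1 ≤ x ∧ x ≤ n ∧ f x ≠ 1}, m ≤ x := by
        rintro x ⟨h1, h2, h3⟩
        by_contra h
        push_neg at h
        exact h3 (hpre x h1 h)
      have h1 := Nat.sInf_le hmT
      have h2 := hmin _ (Nat.sInf_mem ⟨m, hmT⟩)
      omega
    exact ⟨⟨⟨htrans, hdec⟩, hanti, hncyc⟩, hdeg⟩


/-- The step functions: value `v` on `[m,k]`, `1` elsewhere in `[1,n]`. -/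
def gfun (n m v k : ℕ) : ℕ → ℕ := fun x =>
  if ¬(1 ≤ x ∧ x ≤ n) then x else if x < m then 1 else if x ≤ k then v else 1

lemma bad_iff (n m : ℕ) (hn : 4 ≤ n) (hm3 : 3 ≤ m) (hm : m + 1 ≤ n) (f : ℕ → ℕ) :
    (Pfull n m f ∧ 2 ≤ f m ∧ Cyclic n f) ↔
      ∃ v k, 2 ≤ v ∧ v ≤ m ∧ m ≤ k ∧ k ≤ n ∧ f = gfun n m v k := by
  constructor
  · rintro ⟨⟨hout, hpre, hantitone, hbnd⟩, hfm2, hcyc⟩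
    set v := f m with hv
    have hvm : v ≤ m := (hbnd m (le_refl m) (by omega)).2
    -- key claim : on [m,n], f takes only values 1 and v
    have key : ∀ x, m ≤ x → x ≤ n → f x = 1 ∨ f x = v := by
      intro x hx1 hx2
      by_contra hc
      push_neg at hc
      obtain ⟨hne1, hnev⟩ := hc
      have hfx1 : 1 ≤ f x := (hbnd x hx1 hx2).1
      have hfxv : f x ≤ v := hantitone m x (le_refl m) hx1 hx2
      have hfx2 : 2 ≤ f x := by omega
      have hfxlt : f x < v := by omega
      have hmx : m < x := by
        rcases Nat.lt_or_ge m x with h | h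
        · exact h
        · have : x = m := by omega
          rw [this] at hfxlt; omega
      -- first descent, in [m, x-1]
      obtain ⟨i, hi1, hi2, hi3⟩ := exists_desc f m x (by omega) (by omega)
      have himem : i ∈ (Finset.Icc 1 n).filter (fun i => nxt n f i < f i) := by
        rw [Finset.mem_filter, Finset.mem_Icc]
        refine ⟨⟨by omega, by omega⟩, ?_⟩
        rw [nxt, if_neg (by omega)]
        exact hi3
      -- second descent
      have hsnd : ∃ j, j ∈ (Finset.Icc 1 n).filter (fun i => nxt n f i < f i) ∧ i < j := by
        by_cases hfn : 2 ≤ f n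
        · refine ⟨n, ?_, by omega⟩
          rw [Finset.mem_filter, Finset.mem_Icc]
          refine ⟨⟨by omega, le_refl n⟩, ?_⟩
          rw [nxt, if_pos rfl, hpre 1 (le_refl 1) (by omega)]
          omega
        · have hfn1 : f n < f x := by
            have := (hbnd n (by omega) (le_refl n)).1
            omega
          obtain ⟨j, hj1, hj2, hj3⟩ := exists_desc f x n (by omega) hfn1
          refine ⟨j, ?_, by omega⟩
          rw [Finset.mem_filter, Finset.mem_Icc]
          refine ⟨⟨by omega, by omega⟩, ?_⟩
          rw [nxt, if_neg (by omega)]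
          exact hj3
      obtain ⟨j, hjmem, hij⟩ := hsnd
      have : 1 < ((Finset.Icc 1 n).filter (fun i => nxt n f i < f i)).card :=
        Finset.one_lt_card.mpr ⟨i, himem, j, hjmem, by omega⟩
      rw [Cyclic] at hcyc
      omega
    -- k := largest point of [0,n] where f = v
    set k := Nat.findGreatest (fun x => f x = v) n with hk
    have hkm : m ≤ k := Nat.le_findGreatest (by omega) rfl
    have hkn : k ≤ n := Nat.findGreatest_le n
    have hfk : f k = v := Nat.findGreatest_spec (P := fun x => f x = v) (by omega) rfl
    refine ⟨v, k, by omega, hvm, hkm, hkn, ?_⟩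
    funext x
    rw [gfun]
    by_cases hx : 1 ≤ x ∧ x ≤ n
    · rw [if_neg (by tauto)]
      by_cases hxm : x < m
      · rw [if_pos hxm]
        exact hpre x hx.1 hxm
      · rw [if_neg hxm]
        push_neg at hxm
        by_cases hxk : x ≤ k
        · rw [if_pos hxk]
          have h1 : f x ≤ v := hantitone m x (le_refl m) hxm hx.2
          have h2 : f k ≤ f x := hantitone x k hxm hxk hkn
          omega
        · rw [if_neg hxk]
          push_neg at hxk
          have := Nat.findGreatest_is_greatest (P := fun x => f x = v) (hk ▸ hxk) hx.2
          rcases key x hxm hx.2 with h | h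
          · exact h
          · exact absurd h this
    · rw [if_pos hx]
      exact hout x hx
  · rintro ⟨v, k, hv2, hvm, hmk, hkn, rfl⟩
    have hgout : ∀ x, ¬(1 ≤ x ∧ x ≤ n) → gfun n m v k x = x := by
      intro x hx; rw [gfun, if_pos hx]
    have hgval : ∀ x, 1 ≤ x → x ≤ n → gfun n m v k x = if x < m then 1 else if x ≤ k then v else 1 := by
      intro x h1 h2; rw [gfun, if_neg (by tauto)]
    refine ⟨⟨hgout, ?_, ?_, ?_⟩, ?_, ?_⟩
    · intro x h1 h2
      rw [hgval x h1 (by omega), if_pos h2]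
    · intro x y hx hxy hyn
      rw [hgval x (by omega) (by omega), hgval y (by omega) hyn]
      split_ifs <;> omega
    · intro x hx1 hx2
      rw [hgval x (by omega) hx2]
      split_ifs <;> omega
    · rw [hgval m (by omega) (by omega), if_neg (by omega), if_pos hmk]
      exact hv2
    · rw [Cyclic]
      have hsub : (Finset.Icc 1 n).filter (fun i => nxt n (gfun n m v k) i < gfun n m v k i) ⊆ {k} := by
        intro i hi
        rw [Finset.mem_filter, Finset.mem_Icc] at hi
        obtain ⟨⟨h1, h2⟩, hdesc⟩ := hi
        rw [Finset.mem_singleton]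
        rw [nxt] at hdesc
        by_contra hik
        by_cases hin : i = n
        · rw [if_pos hin] at hdesc
          rw [hgval 1 (le_refl 1) (by omega), if_pos (by omega)] at hdesc
          rw [hgval i (by omega) h2] at hdesc
          subst hin
          split_ifs at hdesc <;> omega
        · rw [if_neg hin] at hdesc
          rw [hgval i (by omega) h2, hgval (i + 1) (by omega) (by omega)] at hdesc
          split_ifs at hdesc <;> omega
      calc ((Finset.Icc 1 n).filter (fun i => nxt n (gfun n m v k) i < gfun n m v k i)).card
          ≤ ({k} : Finset ℕ).card := Finset.card_le_card hsub
        _ = 1 := by simp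


def phi (n m : ℕ) (f : ℕ → ℕ) : Finset ℕ := (Finset.Icc m n).image (fun i => f i + (n - i))

/-- Reconstruction of an antitone map from an enumeration `E` of a set. -/
def recon (n m : ℕ) (E : ℕ → ℕ) : ℕ → ℕ := fun x =>
  if 1 ≤ x ∧ x ≤ n then (if x < m then 1 else E (n - x) - (n - x)) else x

lemma fin_strictMono_add {L : ℕ} (g : Fin L → ℕ) (hg : StrictMono g) :
    ∀ (a b : Fin L), a.1 ≤ b.1 → g a + (b.1 - a.1) ≤ g b := by
  have h : ∀ d (a : Fin L) (hb : a.1 + d < L), g a + d ≤ g ⟨a.1 + d, hb⟩ := by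
    intro d
    induction d with
    | zero =>
      intro a hb
      have heq : (⟨a.1 + 0, hb⟩ : Fin L) = a := by apply Fin.ext; simp
      rw [heq]
      omega
    | succ d ih =>
      intro a hb
      have h1 := ih a (by omega)
      have h2 : g ⟨a.1 + d, by omega⟩ < g ⟨a.1 + (d + 1), hb⟩ := by
        apply hg
        rw [Fin.mk_lt_mk]
        omega
      omega
  intro a b hab
  have h2 := h (b.1 - a.1) a (by omega)
  have heq : (⟨a.1 + (b.1 - a.1), by omega⟩ : Fin L) = b := by apply Fin.ext; simp; omega
  rw [heq] at h2
  omega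

lemma phi_injOn (n m : ℕ) (hm3 : 3 ≤ m) (hm : m + 1 ≤ n) :
    Set.InjOn (phi n m) {f | Pfull n m f} := by
  have key : ∀ f g : ℕ → ℕ, Pfull n m f → Pfull n m g → phi n m f = phi n m g →
      ∀ x, m ≤ x → x ≤ n → (∀ y, m ≤ y → y < x → f y = g y) → ¬(g x < f x) := by
    intro f g hf hg hfg x hxm hxn hmin hlt
    have hmem : f x + (n - x) ∈ phi n m g := by
      rw [← hfg, phi, Finset.mem_image]
      exact ⟨x, Finset.mem_Icc.mpr ⟨hxm, hxn⟩, rfl⟩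
    rw [phi, Finset.mem_image] at hmem
    obtain ⟨y, hy, hyv⟩ := hmem
    rw [Finset.mem_Icc] at hy
    have hylt : y < x := by
      by_contra h
      push_neg at h
      have h1 : g y ≤ g x := hg.2.2.1 x y hxm h hy.2
      omega
    have hfy : f y = g y := hmin y hy.1 hylt
    have h2 : f x ≤ f y := hf.2.2.1 y x hy.1 (by omega) hxn
    omega
  intro f hf g hg hfg
  have hfg' : ∀ x, m ≤ x → x ≤ n → f x = g x := by
    by_contra hc
    push_neg at hc
    have hex : ∃ x, m ≤ x ∧ x ≤ n ∧ f x ≠ g x := by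
      obtain ⟨x, h1, h2, h3⟩ := hc
      exact ⟨x, h1, h2, h3⟩
    classical
    obtain ⟨hx₀m, hx₀n, hx₀ne⟩ : m ≤ Nat.find hex ∧ Nat.find hex ≤ n ∧
        f (Nat.find hex) ≠ g (Nat.find hex) := Nat.find_spec hex
    have hmin : ∀ y, m ≤ y → y < Nat.find hex → f y = g y := by
      intro y h1 h2
      have := Nat.find_min hex h2
      push_neg at this
      by_cases hyn : y ≤ n
      · exact this h1 hyn
      · omega
    have h1 := key f g hf hg hfg _ hx₀m hx₀n hmin
    have h2 := key g f hg hf hfg.symm _ hx₀m hx₀n (fun y hy1 hy2 => (hmin y hy1 hy2).symm)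
    omega
  funext x
  by_cases hx : 1 ≤ x ∧ x ≤ n
  · by_cases hxm : x < m
    · rw [hf.2.1 x hx.1 hxm, hg.2.1 x hx.1 hxm]
    · exact hfg' x (by omega) hx.2
  · rw [hf.1 x hx, hg.1 x hx]

lemma phi_image (n m : ℕ) (hm3 : 3 ≤ m) (hm : m + 1 ≤ n) :
    phi n m '' {f | Pfull n m f} = ↑((Finset.Icc 1 n).powersetCard (n - m + 1)) := by
  ext s
  simp only [Set.mem_image, Set.mem_setOf_eq, Finset.mem_coe, Finset.mem_powersetCard]
  constructor
  · rintro ⟨f, hf, rfl⟩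
    constructor
    · intro a ha
      rw [phi, Finset.mem_image] at ha
      obtain ⟨i, hi, rfl⟩ := ha
      rw [Finset.mem_Icc] at hi
      have hb := hf.2.2.2 i hi.1 hi.2
      rw [Finset.mem_Icc]
      omega
    · rw [phi]
      rw [Finset.card_image_of_injOn, Nat.card_Icc]
      · omega
      · intro a ha b hb hab
        rw [Finset.coe_Icc, Set.mem_Icc] at ha hb
        simp only at hab
        rcases Nat.lt_trichotomy a b with h | h | h
        · have := hf.2.2.1 a b ha.1 (by omega) hb.2
          omega
        · exact h
        · have := hf.2.2.1 b a hb.1 (by omega) ha.2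
          omega
  · rintro ⟨hsub, hcard⟩
    classical
    have hLpos : 0 < n - m + 1 := by omega
    set L := n - m + 1 with hL
    set e := s.orderEmbOfFin hcard with he
    set E : ℕ → ℕ := fun j => if h : j < L then e ⟨j, h⟩ else 0 with hE
    have hEmem : ∀ j, j < L → E j ∈ s := by
      intro j hj
      rw [hE]
      simp only [dif_pos hj]
      exact Finset.orderEmbOfFin_mem s hcard _
    have hEbnd : ∀ j, j < L → 1 ≤ E j ∧ E j ≤ n := by
      intro j hj
      have h1 := hsub (hEmem j hj)
      rwa [Finset.mem_Icc] at h1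
    have hEstep : ∀ a b, a ≤ b → b < L → E a + (b - a) ≤ E b := by
      intro a b hab hb
      have ha : a < L := by omega
      rw [hE]
      simp only [dif_pos ha, dif_pos hb]
      exact fin_strictMono_add e e.strictMono ⟨a, ha⟩ ⟨b, hb⟩ hab
    have hElow : ∀ j, j < L → j + 1 ≤ E j := by
      intro j hj
      have h1 := hEstep 0 j (by omega) hj
      have h2 := (hEbnd 0 hLpos).1
      omega
    have hEhigh : ∀ j, j < L → E j + (L - 1 - j) ≤ n := by
      intro j hj
      have h1 := hEstep j (L - 1) (by omega) (by omega)
      have h2 := (hEbnd (L - 1) (by omega)).2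
      omega
    have hEsurj : ∀ a ∈ s, ∃ j, j < L ∧ E j = a := by
      intro a ha
      have hr : a ∈ Set.range e := by
        rw [he, Finset.range_orderEmbOfFin]
        exact ha
      obtain ⟨j, rfl⟩ := hr
      refine ⟨j.1, j.isLt, ?_⟩
      rw [hE]
      simp only [dif_pos j.isLt]
    have hval : ∀ x, m ≤ x → x ≤ n → recon n m E x = E (n - x) - (n - x) := by
      intro x h1 h2
      rw [recon]
      simp only [if_pos (by omega : 1 ≤ x ∧ x ≤ n), if_neg (by omega : ¬ x < m)]
    refine ⟨recon n m E, ⟨?_, ?_, ?_, ?_⟩, ?_⟩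
    · intro x hx
      rw [recon, if_neg hx]
    · intro x h1 h2
      rw [recon, if_pos ⟨h1, by omega⟩, if_pos h2]
    · intro x y hx hxy hyn
      rw [hval x hx (by omega), hval y (by omega) hyn]
      have h1 := hEstep (n - y) (n - x) (by omega) (by omega)
      have h2 := hElow (n - y) (by omega)
      omega
    · intro x hx1 hx2
      rw [hval x hx1 hx2]
      have h1 := hElow (n - x) (by omega)
      have h2 := hEhigh (n - x) (by omega)
      omega
    · apply Finset.Subset.antisymm
      · intro a ha
        rw [phi, Finset.mem_image] at ha
        obtain ⟨i, hi, rfl⟩ := ha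
        rw [Finset.mem_Icc] at hi
        rw [hval i hi.1 hi.2]
        have h1 := hElow (n - i) (by omega)
        have heq : E (n - i) - (n - i) + (n - i) = E (n - i) := by omega
        rw [heq]
        exact hEmem _ (by omega)
      · intro a ha
        obtain ⟨j, hj, rfl⟩ := hEsurj a ha
        rw [phi, Finset.mem_image]
        refine ⟨n - j, Finset.mem_Icc.mpr ⟨by omega, by omega⟩, ?_⟩
        rw [hval (n - j) (by omega) (by omega)]
        have heq : n - (n - j) = j := by omega
        rw [heq]
        have h1 := hElow j hj
        omega

lemma card_Pfull (n m : ℕ) (hm3 : 3 ≤ m) (hm : m + 1 ≤ n) :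
    {f | Pfull n m f}.ncard = Nat.choose n (m - 1) := by
  have h1 := Set.ncard_image_of_injOn (phi_injOn n m hm3 hm)
  rw [phi_image n m hm3 hm, Set.ncard_coe_finset, Finset.card_powersetCard, Nat.card_Icc] at h1
  rw [← h1]
  have h2 : n + 1 - 1 = n := by omega
  rw [h2]
  have h3 : n - m + 1 = n - (m - 1) := by omega
  rw [h3, Nat.choose_symm (by omega)]

lemma Pfull_finite (n m : ℕ) (hm3 : 3 ≤ m) (hm : m + 1 ≤ n) : {f | Pfull n m f}.Finite := by
  apply Set.Finite.of_finite_image _ (phi_injOn n m hm3 hm)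
  rw [phi_image n m hm3 hm]
  exact Finset.finite_toSet _


theorem card_rdstar_degree (n m : ℕ) (hn : 4 ≤ n) (hm3 : 3 ≤ m) (hm : m ≤ n - 1) :
    {f | f ∈ RDstar n ∧ ordDeg n f = m}.ncard
      = Nat.choose n (m - 1) - m - (m - 1) * (n - m) := by
  have hm' : m + 1 ≤ n := by omega
  classical
  set A : Set (ℕ → ℕ) := {f | Pfull n m f} with hA
  set A' : Set (ℕ → ℕ) := {f | Pfull n m f ∧ 2 ≤ f m} with hA'
  set B : Set (ℕ → ℕ) := {f | Pfull n m f ∧ 2 ≤ f m ∧ Cyclic n f} with hB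
  have hAfin : A.Finite := Pfull_finite n m hm3 hm'
  have hA'sub : A' ⊆ A := fun f hf => hf.1
  have hA'fin : A'.Finite := hAfin.subset hA'sub
  have hBsub : B ⊆ A' := fun f hf => ⟨hf.1, hf.2.1⟩
  have hBfin : B.Finite := hA'fin.subset hBsub
  -- the set in question is A' \\ B
  have hSeq : {f | f ∈ RDstar n ∧ ordDeg n f = m} = A' \ B := by
    ext f
    rw [Set.mem_setOf_eq, mem_S_iff n m hn hm3 hm' f, Set.mem_diff, hA', hB,
      Set.mem_setOf_eq, Set.mem_setOf_eq]
    tauto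
  rw [hSeq, Set.ncard_diff hBsub hBfin]
  -- count A'
  have hu : (fun x => if ¬(1 ≤ x ∧ x ≤ n) then x else 1) ∈ A := by
    refine ⟨fun x hx => if_pos hx, ?_, ?_, ?_⟩
    · intro x h1 h2
      exact if_neg (by omega : ¬¬(1 ≤ x ∧ x ≤ n))
    · intro x y hx hxy hyn
      have h1 : ¬¬(1 ≤ y ∧ y ≤ n) := by omega
      have h2 : ¬¬(1 ≤ x ∧ x ≤ n) := by omega
      simp only [if_neg h1, if_neg h2]
      omega
    · intro x hx1 hx2
      have h1 : ¬¬(1 ≤ x ∧ x ≤ n) := by omega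
      simp only [if_neg h1]
      omega
  have hA'eq : A' = A \ {fun x => if ¬(1 ≤ x ∧ x ≤ n) then x else 1} := by
    ext f
    rw [hA', Set.mem_setOf_eq, Set.mem_diff, Set.mem_singleton_iff]
    constructor
    · rintro ⟨hP, h2⟩
      refine ⟨hP, ?_⟩
      intro heq
      have : f m = 1 := by
        have h1 : ¬¬(1 ≤ m ∧ m ≤ n) := by omega
        rw [heq]
        simp only [if_neg h1]
      omega
    · rintro ⟨hP, hne⟩
      refine ⟨hP, ?_⟩
      by_contra h2
      push_neg at h2
      have hfm1 : f m = 1 := by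
        have := hP.2.2.2 m (le_refl m) (by omega)
        omega
      apply hne
      funext x
      by_cases hx : 1 ≤ x ∧ x ≤ n
      · rw [if_neg (by tauto)]
        by_cases hxm : x < m
        · exact hP.2.1 x hx.1 hxm
        · have h1 := hP.2.2.2 x (by omega) hx.2
          have h2 := hP.2.2.1 m x (le_refl m) (by omega) hx.2
          omega
      · rw [if_pos hx]
        exact hP.1 x hx
  have hcardA' : A'.ncard = Nat.choose n (m - 1) - 1 := by
    rw [hA'eq, Set.ncard_diff_singleton_of_mem hu, hA, card_Pfull n m hm3 hm']
  -- count B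
  have hgval : ∀ v k x, m ≤ k → k ≤ n → m ≤ x → x ≤ n →
      gfun n m v k x = if x ≤ k then v else 1 := by
    intro v k x h1 h2 h3 h4
    rw [gfun]
    simp only [if_neg (by omega : ¬¬(1 ≤ x ∧ x ≤ n)), if_neg (by omega : ¬ x < m)]
  have hBeq : B = (fun p : ℕ × ℕ => gfun n m p.1 p.2) ''
      ↑(Finset.Icc 2 m ×ˢ Finset.Icc m n) := by
    ext f
    rw [hB, Set.mem_setOf_eq, bad_iff n m hn hm3 hm' f]
    constructor
    · rintro ⟨v, k, h1, h2, h3, h4, rfl⟩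
      refine ⟨(v, k), ?_, rfl⟩
      rw [Finset.mem_coe, Finset.mem_product, Finset.mem_Icc, Finset.mem_Icc]
      exact ⟨⟨h1, h2⟩, h3, h4⟩
    · rintro ⟨⟨v, k⟩, hp, rfl⟩
      rw [Finset.mem_coe, Finset.mem_product, Finset.mem_Icc, Finset.mem_Icc] at hp
      exact ⟨v, k, hp.1.1, hp.1.2, hp.2.1, hp.2.2, rfl⟩
  have hinj : Set.InjOn (fun p : ℕ × ℕ => gfun n m p.1 p.2)
      ↑(Finset.Icc 2 m ×ˢ Finset.Icc m n) := by
    rintro ⟨v, k⟩ hp ⟨v', k'⟩ hq heq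
    rw [Finset.mem_coe, Finset.mem_product, Finset.mem_Icc, Finset.mem_Icc] at hp hq
    simp only at heq
    have hv : v = v' := by
      have h1 := congrFun heq m
      rw [hgval v k m hp.2.1 hp.2.2 (le_refl m) (by omega),
        hgval v' k' m hq.2.1 hq.2.2 (le_refl m) (by omega),
        if_pos hp.2.1, if_pos hq.2.1] at h1
      exact h1
    have hk : k = k' := by
      rcases Nat.lt_trichotomy k k' with h | h | h
      · have h1 := congrFun heq k'
        rw [hgval v k k' hp.2.1 hp.2.2 hq.2.1 hq.2.2,
          hgval v' k' k' hq.2.1 hq.2.2 hq.2.1 hq.2.2,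
          if_neg (by omega), if_pos (le_refl k')] at h1
        omega
      · exact h
      · have h1 := congrFun heq k
        rw [hgval v k k hp.2.1 hp.2.2 hp.2.1 hp.2.2,
          hgval v' k' k hq.2.1 hq.2.2 hp.2.1 hp.2.2,
          if_pos (le_refl k), if_neg (by omega)] at h1
        omega
    rw [hv, hk]
  have hcardB : B.ncard = (m - 1) * (n + 1 - m) := by
    rw [hBeq, Set.ncard_image_of_injOn hinj, Set.ncard_coe_finset,
      Finset.card_product, Nat.card_Icc, Nat.card_Icc]
    have h2 : m + 1 - 2 = m - 1 := by omega
    rw [h2]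
  rw [hcardA', hcardB]
  have hfact : (m - 1) * (n + 1 - m) = (m - 1) * (n - m) + (m - 1) := by
    have h : n + 1 - m = (n - m) + 1 := by omega
    rw [h]
    ring
  rw [hfact]
  generalize Nat.choose n (m - 1) = C
  generalize (m - 1) * (n - m) = t
  omega

end ORDPaper
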